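/- arXiv:2308.12407 — 5 statements merged into one kernel-verified Lean document; each statement's English description precedes it below -/
import Mathlib

section
/- Let B be the 2×4 complex matrix with rows (c₂ρ, 0, γ₁, 0) and (0, c₁ρ, 0, γ₂), where c₁, c₂, ρ > 0 are real and γ₁, γ₂ ∈ ℂ have negative real parts, and let S₂' be the real symmetric 4×4 matrix with entries S₂'[1,3] = S₂'[3,1] = c₂, S₂'[2,4] = S₂'[4,2] = c₁, and all other entries zero. Then with β₀ := -1/(2ρ Re γ₁) - 1/(2ρ Re γ₂), there exists ε > 0 such that for all nonzero r ∈ ℂ⁴, β₀ ‖B r‖² > ε ‖r‖² - r* S₂' r. -/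
set_option maxHeartbeats 1000000

open Complex

lemma normsq_key (z : ℂ) : ‖z‖ ^ 2 = z.re ^ 2 + z.im ^ 2 := by
  rw [Complex.sq_norm, Complex.normSq_apply]; ring

lemma hid_aux (c ρ β M : ℝ) (hM : M = β * c ^ 2 * ρ ^ 2) (hM0 : M ≠ 0)
    (γ w : ℂ) (hw : w = (β : ℂ) * c * ρ * γ + c) (z₀ z₂ : ℂ) :
    β * ‖(c : ℂ) * (ρ : ℂ) * z₀ + γ * z₂‖ ^ 2
        + 2 * c * ((starRingEnd ℂ) z₀ * z₂).re
      = (1 / M) * ‖(M : ℂ) * z₀ + w * z₂‖ ^ 2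
        + (β * (γ.re ^ 2 + γ.im ^ 2) - (w.re ^ 2 + w.im ^ 2) / M) * ‖z₂‖ ^ 2 := by
  have hwre : w.re = β * c * ρ * γ.re + c := by simp [hw]
  have hwim : w.im = β * c * ρ * γ.im := by simp [hw]
  rw [normsq_key, normsq_key, normsq_key]
  simp only [Complex.add_re, Complex.add_im, Complex.mul_re, Complex.mul_im,
    Complex.ofReal_re, Complex.ofReal_im, Complex.conj_re, Complex.conj_im]
  field_simp
  rw [hwre, hwim, hM]
  ring

lemma hz0_aux (M : ℝ) (w z₀ z₂ : ℂ) :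
    M ^ 2 * ‖z₀‖ ^ 2 ≤ 2 * ‖(M : ℂ) * z₀ + w * z₂‖ ^ 2
      + 2 * (w.re ^ 2 + w.im ^ 2) * ‖z₂‖ ^ 2 := by
  rw [normsq_key, normsq_key, normsq_key]
  simp only [Complex.add_re, Complex.add_im, Complex.mul_re, Complex.mul_im,
    Complex.ofReal_re, Complex.ofReal_im]
  nlinarith [sq_nonneg (M * z₀.re + 2 * (w.re * z₂.re - w.im * z₂.im)),
    sq_nonneg (M * z₀.im + 2 * (w.re * z₂.im + w.im * z₂.re))]

lemma block (c ρ β : ℝ) (γ : ℂ) (hc : 0 < c) (hρ : 0 < ρ) (hβ : 0 < β)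
    (hkey : 2 * β * ρ * γ.re + 1 < 0) :
    ∃ l > 0, ∀ z₀ z₂ : ℂ,
      β * ‖(c : ℂ) * (ρ : ℂ) * z₀ + γ * z₂‖ ^ 2
          + 2 * c * ((starRingEnd ℂ) z₀ * z₂).re
        ≥ l * (‖z₀‖ ^ 2 + ‖z₂‖ ^ 2) := by
  obtain ⟨M, hM⟩ : ∃ M : ℝ, M = β * c ^ 2 * ρ ^ 2 := ⟨_, rfl⟩
  have hM0 : 0 < M := by rw [hM]; positivity
  obtain ⟨w, hw⟩ : ∃ w : ℂ, w = (β : ℂ) * c * ρ * γ + c := ⟨_, rfl⟩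
  have hwre : w.re = β * c * ρ * γ.re + c := by simp [hw]
  have hwim : w.im = β * c * ρ * γ.im := by simp [hw]
  obtain ⟨N, hN⟩ : ∃ N : ℝ, N = w.re ^ 2 + w.im ^ 2 := ⟨_, rfl⟩
  have hN0 : 0 ≤ N := by rw [hN]; positivity
  obtain ⟨K, hK⟩ : ∃ K : ℝ, K = β * (γ.re ^ 2 + γ.im ^ 2) - N / M := ⟨_, rfl⟩
  have hK0 : 0 < K := by
    rw [hK, sub_pos, div_lt_iff₀ hM0, hN, hwre, hwim, hM]
    nlinarith [mul_pos (mul_pos hc hc) (neg_pos.mpr hkey)]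
  have hden : 0 < 2 * N / M ^ 2 + 1 := by positivity
  obtain ⟨l, hl⟩ : ∃ l : ℝ, l = min (M / 2) (K / (2 * N / M ^ 2 + 1)) := ⟨_, rfl⟩
  have hl0 : 0 < l := by
    rw [hl]; exact lt_min (by positivity) (by positivity)
  refine ⟨l, hl0, fun z₀ z₂ => ?_⟩
  obtain ⟨P, hP⟩ : ∃ P : ℝ, P = ‖(M : ℂ) * z₀ + w * z₂‖ ^ 2 := ⟨_, rfl⟩
  obtain ⟨Q, hQ⟩ : ∃ Q : ℝ, Q = ‖z₂‖ ^ 2 := ⟨_, rfl⟩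
  have hP0 : 0 ≤ P := by rw [hP]; positivity
  have hQ0 : 0 ≤ Q := by rw [hQ]; positivity
  have hid := hid_aux c ρ β M hM hM0.ne' γ w hw z₀ z₂
  rw [← hP, ← hQ, ← hN, ← hK] at hid
  have hz0 : M ^ 2 * ‖z₀‖ ^ 2 ≤ 2 * P + 2 * N * Q := by
    rw [hP, hQ, hN]; exact hz0_aux M w z₀ z₂
  have hl1 : 2 * l ≤ M := by
    have h := min_le_left (M / 2) (K / (2 * N / M ^ 2 + 1)); rw [← hl] at h; linarith
  have hl2 : 2 * l * N + l * M ^ 2 ≤ M ^ 2 * K := by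
    have h := min_le_right (M / 2) (K / (2 * N / M ^ 2 + 1))
    rw [← hl, le_div_iff₀ hden] at h
    have hM2 : (0:ℝ) < M ^ 2 := by positivity
    have h2 := mul_le_mul_of_nonneg_right h hM2.le
    have hexp : l * (2 * N / M ^ 2 + 1) * M ^ 2 = 2 * l * N + l * M ^ 2 := by
      field_simp
    nlinarith
  have hlz : l * (M ^ 2 * ‖z₀‖ ^ 2) ≤ l * (2 * P + 2 * N * Q) :=
    mul_le_mul_of_nonneg_left hz0 hl0.le
  have h1 : 2 * l * P ≤ M * P := mul_le_mul_of_nonneg_right hl1 hP0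
  have h2 : (2 * l * N + l * M ^ 2) * Q ≤ (M ^ 2 * K) * Q :=
    mul_le_mul_of_nonneg_right hl2 hQ0
  have final : (M ^ 2) * (l * (‖z₀‖ ^ 2 + Q)) ≤ (M ^ 2) * ((1 / M) * P + K * Q) := by
    have hrhs : M ^ 2 * ((1 / M) * P + K * Q) = M * P + M ^ 2 * K * Q := by
      field_simp
    rw [hrhs]
    nlinarith [hlz, h1, h2]
  rw [hid, ge_iff_le, ← hQ]
  exact le_of_mul_le_mul_left final (pow_pos hM0 2)

open Matrix


open Matrix

theorem stmt_3 (ρ c₁ c₂ : ℝ) (hρ : ρ > 0) (hc : c₁ > c₂) (hc₂ : c₂ > 0)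
    (γ₁ γ₂ : ℂ) (h₁ : γ₁.re < 0) (h₂ : γ₂.re < 0)
    (B : Matrix (Fin 2) (Fin 4) ℂ)
    (hB : B = !![(c₂ * ρ : ℂ), 0, γ₁, 0; 0, (c₁ * ρ : ℂ), 0, γ₂])
    (S₂' : Matrix (Fin 4) (Fin 4) ℂ)
    (hS : S₂' = !![0, 0, (c₂ : ℂ), 0; 0, 0, 0, (c₁ : ℂ);
                   (c₂ : ℂ), 0, 0, 0; 0, (c₁ : ℂ), 0, 0])
    (β₀ : ℝ) (hβ₀ : β₀ = -1 / (2 * ρ * γ₁.re) - 1 / (2 * ρ * γ₂.re)) :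
    ∃ ε > 0, ∀ r : Fin 4 → ℂ, r ≠ 0 →
      β₀ * ∑ i, ‖B.mulVec r i‖ ^ 2 >
        ε * ∑ i, ‖r i‖ ^ 2 - (star r ⬝ᵥ S₂'.mulVec r).re := by

  have hc₁ : 0 < c₁ := lt_trans hc₂ hc
  have hβ : 0 < β₀ := by
    rw [hβ₀]
    have t1 : 0 < -1 / (2 * ρ * γ₁.re) := by
      apply div_pos_of_neg_of_neg (by norm_num)
      nlinarith
    have t2 : 0 < -(1 / (2 * ρ * γ₂.re)) := by
      rw [neg_pos]
      apply div_neg_of_pos_of_neg one_pos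
      nlinarith
    linarith
  have hkey1 : 2 * β₀ * ρ * γ₁.re + 1 < 0 := by
    rw [hβ₀]
    have e : 2 * (-1 / (2 * ρ * γ₁.re) - 1 / (2 * ρ * γ₂.re)) * ρ * γ₁.re + 1
        = -(γ₁.re / γ₂.re) := by
      field_simp [hρ.ne', h₁.ne, h₂.ne]
      ring
    rw [e]
    have : 0 < γ₁.re / γ₂.re := div_pos_of_neg_of_neg h₁ h₂
    linarith
  have hkey2 : 2 * β₀ * ρ * γ₂.re + 1 < 0 := by
    rw [hβ₀]
    have e : 2 * (-1 / (2 * ρ * γ₁.re) - 1 / (2 * ρ * γ₂.re)) * ρ * γ₂.re + 1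
        = -(γ₂.re / γ₁.re) := by
      field_simp [hρ.ne', h₁.ne, h₂.ne]
      ring
    rw [e]
    have : 0 < γ₂.re / γ₁.re := div_pos_of_neg_of_neg h₂ h₁
    linarith
  obtain ⟨l₁, hl₁0, hl₁⟩ := block c₂ ρ β₀ γ₁ hc₂ hρ hβ hkey1
  obtain ⟨l₂, hl₂0, hl₂⟩ := block c₁ ρ β₀ γ₂ hc₁ hρ hβ hkey2
  refine ⟨min l₁ l₂ / 2, by positivity, fun r hr => ?_⟩
  have hBr0 : B.mulVec r 0 = (c₂ : ℂ) * (ρ : ℂ) * r 0 + γ₁ * r 2 := by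
    subst hB
    simp [Matrix.mulVec, dotProduct, Fin.sum_univ_four, Complex.ofReal_mul, Matrix.vecHead, Matrix.vecTail]
  have hBr1 : B.mulVec r 1 = (c₁ : ℂ) * (ρ : ℂ) * r 1 + γ₂ * r 3 := by
    subst hB
    simp [Matrix.mulVec, dotProduct, Fin.sum_univ_four, Complex.ofReal_mul, Matrix.vecHead, Matrix.vecTail]
  have hRe : (star r ⬝ᵥ S₂'.mulVec r).re
      = 2 * c₂ * ((starRingEnd ℂ) (r 0) * r 2).re
        + 2 * c₁ * ((starRingEnd ℂ) (r 1) * r 3).re := by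
    have hv0 : S₂'.mulVec r 0 = (c₂ : ℂ) * r 2 := by
      subst hS; simp [Matrix.mulVec, dotProduct, Fin.sum_univ_four, Matrix.vecHead, Matrix.vecTail]
    have hv1 : S₂'.mulVec r 1 = (c₁ : ℂ) * r 3 := by
      subst hS; simp [Matrix.mulVec, dotProduct, Fin.sum_univ_four, Matrix.vecHead, Matrix.vecTail]
    have hv2 : S₂'.mulVec r 2 = (c₂ : ℂ) * r 0 := by
      subst hS; simp [Matrix.mulVec, dotProduct, Fin.sum_univ_four, Matrix.vecHead, Matrix.vecTail]
    have hv3 : S₂'.mulVec r 3 = (c₁ : ℂ) * r 1 := by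
      subst hS; simp [Matrix.mulVec, dotProduct, Fin.sum_univ_four, Matrix.vecHead, Matrix.vecTail]
    rw [dotProduct, Fin.sum_univ_four, hv0, hv1, hv2, hv3]
    simp only [Pi.star_apply, RCLike.star_def]
    simp only [Complex.add_re, Complex.mul_re, Complex.mul_im, Complex.add_im,
      Complex.conj_re, Complex.conj_im, Complex.ofReal_re, Complex.ofReal_im]
    ring
  have key1 := hl₁ (r 0) (r 2)
  have key2 := hl₂ (r 1) (r 3)
  have hT : 0 < ∑ i, ‖r i‖ ^ 2 := by
    obtain ⟨i, hi⟩ := Function.ne_iff.mp hr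
    have hni : 0 < ‖r i‖ ^ 2 := pow_pos (norm_pos_iff.mpr hi) 2
    have hle : ‖r i‖ ^ 2 ≤ ∑ j, ‖r j‖ ^ 2 :=
      Finset.single_le_sum (f := fun j => ‖r j‖ ^ 2)
        (fun j _ => by positivity) (Finset.mem_univ i)
    linarith
  set m := min l₁ l₂ with hm
  have hm0 : 0 < m := lt_min hl₁0 hl₂0
  have hm1 : m * (‖r 0‖ ^ 2 + ‖r 2‖ ^ 2) ≤ l₁ * (‖r 0‖ ^ 2 + ‖r 2‖ ^ 2) :=
    mul_le_mul_of_nonneg_right (min_le_left _ _) (by positivity)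
  have hm2 : m * (‖r 1‖ ^ 2 + ‖r 3‖ ^ 2) ≤ l₂ * (‖r 1‖ ^ 2 + ‖r 3‖ ^ 2) :=
    mul_le_mul_of_nonneg_right (min_le_right _ _) (by positivity)
  have hmT : 0 < m / 2 * ∑ i, ‖r i‖ ^ 2 := by positivity
  rw [Fin.sum_univ_two, hBr0, hBr1, hRe]
  rw [Fin.sum_univ_four] at hmT ⊢
  rw [Fin.sum_univ_four] at hT
  linarith [key1, key2, hm1, hm2, hmT]
end

section
/- Let c₁ > c₂ > 0 and c ∈ ℂ with c ≠ 0, and define b₁ = √(1 - c²/c₁²), b₂ = √(1 - c²/c₂²) using the principal square root, assuming b₂ ≠ 0. Then the vectors ŵ₁' = (-2i c₂ b₁, c₂²(1 + b₂²)/c₁, c, b₁ c i) and ŵ₂' = (-c₂ i (1/b₂ + b₂), 2c₂²/c₁, c, c i / b₂) in ℂ⁴ are linearly independent. -/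
open Complex

theorem stmt_7 (c₁ c₂ : ℝ) (hc : c₁ > c₂) (hc₂ : c₂ > 0)
    (c : ℂ) (hcne : c ≠ 0)
    (b₁ b₂ : ℂ)
    (hb₁ : b₁ = (1 - c ^ 2 / (c₁ : ℂ) ^ 2) ^ ((1 : ℂ) / 2))
    (hb₂ : b₂ = (1 - c ^ 2 / (c₂ : ℂ) ^ 2) ^ ((1 : ℂ) / 2))
    (hb₂ne : b₂ ≠ 0) :
    LinearIndependent ℂ
      ![(![-2 * I * c₂ * b₁, (c₂ : ℂ) ^ 2 * (1 + b₂ ^ 2) / c₁, c, b₁ * c * I] :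
          Fin 4 → ℂ),
        ![-c₂ * I * (1 / b₂ + b₂), 2 * (c₂ : ℂ) ^ 2 / c₁, c, c * I / b₂]] := by
  have hc₁ : (c₁ : ℂ) ≠ 0 := by
    exact_mod_cast ne_of_gt (lt_trans hc₂ hc)
  have hc₂' : (c₂ : ℂ) ≠ 0 := by
    exact_mod_cast ne_of_gt hc₂
  have hz : (1 - c ^ 2 / (c₂ : ℂ) ^ 2) ≠ 0 := by
    intro h
    apply hb₂ne
    rw [hb₂, h, Complex.zero_cpow (by norm_num)]
  have hsq : b₂ ^ 2 = 1 - c ^ 2 / (c₂ : ℂ) ^ 2 := by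
    rw [hb₂, sq, ← Complex.cpow_add _ _ hz]
    norm_num
  rw [LinearIndependent.pair_iff]
  intro s t hst
  have h2 := congrFun hst 2
  have h1 := congrFun hst 1
  simp [Fin.isValue, Matrix.cons_val_one, Matrix.cons_val_two] at h1 h2
  -- h2 : s * c + t * c = 0
  have hst' : s + t = 0 := by
    have := mul_right_cancel₀ hcne (by linear_combination h2 : (s + t) * c = 0 * c)
    simpa using this
  have ht : t = -s := by linear_combination hst'
  subst ht
  field_simp at h1
  have hsq' : b₂ ^ 2 * (c₂ : ℂ) ^ 2 = (c₂ : ℂ) ^ 2 - c ^ 2 := by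
    rw [hsq]; field_simp
  have hs : s * c ^ 2 = 0 := by
    linear_combination (-1 : ℂ) * h1 + s * hsq'
  have hs0 : s = 0 := by
    rcases mul_eq_zero.mp hs with h | h
    · exact h
    · exact absurd (pow_eq_zero_iff (by norm_num) |>.mp h) hcne
  exact ⟨hs0, by simp [hs0]⟩
end

section
/- Let c₁ > c₂ > 0 and let c be a real number with 0 < |c| < c₂, so that b₁ = √(1 - c²/c₁²) and b₂ = √(1 - c²/c₂²) are positive reals. Let S₂' be the real symmetric 4×4 matrix with S₂'[1,3] = S₂'[3,1] = c₂, S₂'[2,4] = S₂'[4,2] = c₁ and zeros elsewhere, and let ŵ₁', ŵ₂' ∈ ℂ⁴ be the mode vectors ŵ₁' = (-2i c₂ b₁, c₂²(1+b₂²)/c₁, c, b₁ c i) and ŵ₂' = (-c₂ i (1/b₂ + b₂), 2c₂²/c₁, c, c i / b₂). Then r* S₂' r = 0 for every r in the span of {ŵ₁', ŵ₂'}. -/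
open Matrix Complex

theorem stmt_8 (c₁ c₂ c : ℝ) (hc : c₁ > c₂) (hc₂ : c₂ > 0)
    (hcne : c ≠ 0) (hsub : |c| < c₂)
    (b₁ b₂ : ℝ)
    (hb₁ : b₁ = Real.sqrt (1 - c ^ 2 / c₁ ^ 2))
    (hb₂ : b₂ = Real.sqrt (1 - c ^ 2 / c₂ ^ 2))
    (S₂' : Matrix (Fin 4) (Fin 4) ℂ)
    (hS : S₂' = !![0, 0, (c₂ : ℂ), 0; 0, 0, 0, (c₁ : ℂ);
                   (c₂ : ℂ), 0, 0, 0; 0, (c₁ : ℂ), 0, 0])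
    (w₁ w₂ : Fin 4 → ℂ)
    (hw₁ : w₁ = ![-2 * I * c₂ * b₁, (c₂ : ℂ) ^ 2 * (1 + (b₂ : ℂ) ^ 2) / c₁,
      (c : ℂ), (b₁ : ℂ) * c * I])
    (hw₂ : w₂ = ![-c₂ * I * (1 / b₂ + b₂), 2 * (c₂ : ℂ) ^ 2 / c₁,
      (c : ℂ), (c : ℂ) * I / b₂]) :
    ∀ r ∈ Submodule.span ℂ ({w₁, w₂} : Set (Fin 4 → ℂ)),
      star r ⬝ᵥ S₂'.mulVec r = 0 := by
  have hc₁0 : (0:ℝ) < c₁ := lt_trans hc₂ hc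
  have hb₂pos : 0 < b₂ := by
    rw [hb₂]
    apply Real.sqrt_pos.mpr
    have h1 : c ^ 2 < c₂ ^ 2 := by nlinarith [abs_nonneg c, _root_.sq_abs c]
    have h2 : c ^ 2 / c₂ ^ 2 < 1 := (div_lt_one (by positivity)).mpr h1
    linarith
  have hb₂ne : ((b₂ : ℂ)) ≠ 0 := by
    exact_mod_cast ne_of_gt hb₂pos
  have hc₁ne : ((c₁ : ℂ)) ≠ 0 := by
    exact_mod_cast ne_of_gt hc₁0
  intro r hr
  rw [Submodule.mem_span_pair] at hr
  obtain ⟨a, b, rfl⟩ := hr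
  subst hS hw₁ hw₂
  simp only [Matrix.mulVec, dotProduct, Fin.sum_univ_four, Pi.add_apply,
    Pi.smul_apply, smul_eq_mul, Pi.star_apply, Matrix.cons_val_zero,
    Matrix.cons_val_one, Matrix.head_cons, Matrix.cons_val_two,
    Matrix.tail_cons, Matrix.cons_val_three, Matrix.head_fin_const,
    Matrix.cons_val', Matrix.empty_val', Matrix.cons_val_fin_one,
    Matrix.of_apply, star_add, star_mul', Complex.star_def, _root_.map_mul, map_add,
    map_div₀, map_pow, map_neg, _root_.map_one, _root_.map_ofNat, Complex.conj_ofReal,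
    Complex.conj_I]
  field_simp
  ring
end

section
/- Let ρ > 0, μ > 0, λ + μ > 0, c₁ = √((λ+2μ)/ρ), c₂ = √(μ/ρ), and let A₂ and C be the 5×5 real matrices of the velocity–stress formulation and the symmetrizing change of variables, respectively: A₂ has nonzero entries A₂[1,4] = 1/ρ, A₂[2,5] = 1/ρ, A₂[3,2] = λ, A₂[4,1] = μ, A₂[5,2] = λ+2μ; C has nonzero entries C[1,4] = 1/c₁, C[2,5] = 1/c₁, C[3,1] = 2ρc₂√(c₁²-c₂²)/c₁², C[3,3] = ρ(1-2c₂²/c₁²), C[4,2] = c₂ρ/c₁, C[5,3] = ρ. Then C⁻¹ A₂ C equals the symmetric matrix S₂ with nonzero entries S₂[2,4] = S₂[4,2] = c₂ and S₂[3,5] = S₂[5,3] = c₁; in particular C⁻¹ A₂ C is symmetric. -/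
open Matrix

set_option maxHeartbeats 2000000 in
theorem stmt_15 (ρ lam μ : ℝ) (hρ : ρ > 0) (hμ : μ > 0) (hlm : lam + μ > 0)
    (c₁ c₂ : ℝ) (hc₁ : c₁ = Real.sqrt ((lam + 2 * μ) / ρ))
    (hc₂ : c₂ = Real.sqrt (μ / ρ))
    (A₂ C S₂ : Matrix (Fin 5) (Fin 5) ℝ)
    (hA₂ : A₂ = !![0, 0, 0, 1 / ρ, 0;
                   0, 0, 0, 0, 1 / ρ;
                   0, lam, 0, 0, 0;
                   μ, 0, 0, 0, 0;
                   0, lam + 2 * μ, 0, 0, 0])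
    (hC : C = !![0, 0, 0, 1 / c₁, 0;
                 0, 0, 0, 0, 1 / c₁;
                 2 * ρ * c₂ * Real.sqrt (c₁ ^ 2 - c₂ ^ 2) / c₁ ^ 2, 0,
                   ρ * (1 - 2 * c₂ ^ 2 / c₁ ^ 2), 0, 0;
                 0, c₂ * ρ / c₁, 0, 0, 0;
                 0, 0, ρ, 0, 0])
    (hS₂ : S₂ = !![0, 0, 0, 0, 0;
                   0, 0, 0, c₂, 0;
                   0, 0, 0, 0, c₁;
                   0, c₂, 0, 0, 0;
                   0, 0, c₁, 0, 0]) :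
    C⁻¹ * A₂ * C = S₂ ∧ (C⁻¹ * A₂ * C).IsSymm := by
  have h2 : (lam + 2 * μ) / ρ > 0 := div_pos (by linarith) hρ
  have hc1pos : c₁ > 0 := by rw [hc₁]; exact Real.sqrt_pos.mpr h2
  have hc2pos : c₂ > 0 := by rw [hc₂]; exact Real.sqrt_pos.mpr (by positivity)
  have hc1sq : c₁ ^ 2 = (lam + 2 * μ) / ρ := by
    rw [hc₁, Real.sq_sqrt h2.le]
  have hc2sq : c₂ ^ 2 = μ / ρ := by
    rw [hc₂, Real.sq_sqrt (by positivity : (0:ℝ) ≤ μ / ρ)]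
  have hdiff : c₁ ^ 2 - c₂ ^ 2 > 0 := by
    rw [hc1sq, hc2sq, div_sub_div_same, gt_iff_lt, lt_div_iff₀ hρ]
    nlinarith
  have hsd : Real.sqrt (c₁ ^ 2 - c₂ ^ 2) > 0 := Real.sqrt_pos.mpr hdiff
  have hc1ne : c₁ ≠ 0 := ne_of_gt hc1pos
  have hc2ne : c₂ ≠ 0 := ne_of_gt hc2pos
  have hρne : ρ ≠ 0 := ne_of_gt hρ
  have hlam : lam = ρ * c₁ ^ 2 - 2 * ρ * c₂ ^ 2 := by
    rw [hc1sq, hc2sq]; field_simp; ring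
  have hmu : μ = ρ * c₂ ^ 2 := by rw [hc2sq]; field_simp
  have hkey : A₂ * C = C * S₂ := by
    subst hA₂ hC hS₂
    rw [hlam, hmu]
    ext i j
    fin_cases i <;> fin_cases j <;>
      simp [Matrix.mul_apply, Fin.sum_univ_five, Matrix.vecHead, Matrix.vecTail] <;>
      field_simp <;> ring
  have hdet : C.det ≠ 0 := by
    subst hC
    simp [Matrix.det_succ_row_zero, Fin.sum_univ_succ, Fin.succAbove]
    have := hρ.ne'; have := hc2pos.ne'; have := hsd.ne'
    tauto
  have hCC : C⁻¹ * C = 1 := Matrix.nonsing_inv_mul C (isUnit_iff_ne_zero.mpr hdet)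
  have hmain : C⁻¹ * A₂ * C = S₂ := by
    rw [mul_assoc, hkey, ← mul_assoc, hCC, one_mul]
  refine ⟨hmain, ?_⟩
  rw [hmain, Matrix.IsSymm, hS₂]
  ext i j
  fin_cases i <;> fin_cases j <;> simp [Matrix.vecHead, Matrix.vecTail]
end

section
/- Let α₀ ∈ ℂ, c ∈ ℂ, c₁ > c₂ > 0, and b₁ = √(1-c²/c₁²), b₂ = √(1-c²/c₂²) with b₂ ≠ 0. If the mode vectors ŵ₁' = (-2i c₂ b₁, c₂²(1+b₂²)/c₁, c, b₁ c i) and ŵ₂' = (-c₂ i(1/b₂ + b₂), 2c₂²/c₁, c, c i/b₂) satisfy ŵ₁' = α₀ ŵ₂' for some nonzero scalar α₀, then necessarily α₀ = b₁ b₂ and c = 0. -/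
open Complex

theorem stmt_17 (c₁ c₂ : ℝ) (hc : c₁ > c₂) (hc₂ : c₂ > 0)
    (c : ℂ) (α₀ : ℂ) (hα₀ : α₀ ≠ 0)
    (b₁ b₂ : ℂ)
    (hb₁ : b₁ = (1 - c ^ 2 / (c₁ : ℂ) ^ 2) ^ ((1 : ℂ) / 2))
    (hb₂ : b₂ = (1 - c ^ 2 / (c₂ : ℂ) ^ 2) ^ ((1 : ℂ) / 2))
    (hb₂ne : b₂ ≠ 0)
    (heq : (![-2 * I * c₂ * b₁, (c₂ : ℂ) ^ 2 * (1 + b₂ ^ 2) / c₁, c, b₁ * c * I] :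
        Fin 4 → ℂ) =
      α₀ • ![-c₂ * I * (1 / b₂ + b₂), 2 * (c₂ : ℂ) ^ 2 / c₁, c, c * I / b₂]) :
    α₀ = b₁ * b₂ ∧ c = 0 := by
  have hc₁ : (c₁ : ℂ) ≠ 0 := by
    have : (c₁ : ℝ) ≠ 0 := by linarith
    exact_mod_cast this
  have hc₂' : (c₂ : ℂ) ≠ 0 := by exact_mod_cast hc₂.ne'
  have h1 := congr_fun heq 1
  have h2 := congr_fun heq 2
  simp [Pi.smul_apply, smul_eq_mul] at h1 h2
  have hb₂sq : b₂ ^ 2 = 1 - c ^ 2 / (c₂ : ℂ) ^ 2 := by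
    conv_lhs => rw [hb₂, one_div]
    exact Complex.cpow_ofNat_inv_pow _ 2
  have hkey : 1 + b₂ ^ 2 = α₀ * 2 := by
    field_simp at h1
    exact mul_left_cancel₀ (pow_ne_zero 2 hc₂') (by linear_combination (c₂ : ℂ) ^ 2 * h1)
  have hc0 : c = 0 := by
    by_contra hcne
    have hα1 : α₀ = 1 := by
      have h : c * α₀ = c * 1 := by linear_combination -h2
      exact mul_left_cancel₀ hcne h
    rw [hα1] at hkey
    have hb1 : b₂ ^ 2 = 1 := by linear_combination hkey
    have hdiv : c ^ 2 / (c₂ : ℂ) ^ 2 = 0 := by linear_combination hb₂sq - hb1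
    have hcsq : c ^ 2 = 0 := by
      field_simp at hdiv
      simpa using hdiv
    exact hcne (pow_eq_zero_iff two_ne_zero |>.mp hcsq)
  subst hc0
  have hb₂1 : b₂ = 1 := by simp [hb₂]
  have hb₁1 : b₁ = 1 := by simp [hb₁]
  refine ⟨?_, rfl⟩
  rw [hb₁1, hb₂1]
  rw [hb₂1] at hkey
  linear_combination -hkey / 2
end
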